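/- arXiv:1301.3600 — 2 statements merged into one kernel-verified Lean document; each statement's English description precedes it below -/
import Mathlib

section
/- Let (ω, u) be a one-dimensional scattering resonance pair on [0,L] with Im ω < 0 and Re ω ≠ 0. Then |Im ω| = (|u(0)|² + |u(L)|²) / (2 ∫₀ᴸ n²|u|²). -/
open MeasureTheory intervalIntegral Complex

theorem stmt_2
    (L nminus nplus : ℝ) (hL : 0 < L)
    (n : ℝ → ℝ) (hn_meas : Measurable n)
    (hnm : 0 < nminus)
    (hbounds : ∀ x ∈ Set.Icc (0:ℝ) L, nminus ≤ n x ∧ n x ≤ nplus)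
    (ω : ℂ) (hIm : ω.im < 0) (hRe : ω.re ≠ 0)
    (u : ℝ → ℂ)
    (hu_C1 : ContDiffOn ℝ 1 u (Set.Icc 0 L))
    (hu_ne : ∃ x ∈ Set.Icc (0:ℝ) L, u x ≠ 0)
    (hODE : ∀ x ∈ Set.Ioo (0:ℝ) L,
      deriv (deriv u) x + ω ^ 2 * ((n x : ℂ)) ^ 2 * u x = 0)
    (hBC0 : deriv u 0 = -Complex.I * ω * u 0)
    (hBCL : deriv u L = Complex.I * ω * u L) :
    |ω.im| = (‖u 0‖ ^ 2 + ‖u L‖ ^ 2)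
      / (2 * ∫ x in (0:ℝ)..L, (n x) ^ 2 * ‖u x‖ ^ 2) := by
  have hω : ω ≠ 0 := fun h => by simp [h] at hIm
  set g : ℝ → ℂ := derivWithin u (Set.Icc 0 L) with hg_def
  set W : ℝ → ℝ := fun x => ((starRingEnd ℂ) (u x) * g x).im with hW_def
  set f : ℝ → ℝ := fun x => (n x) ^ 2 * ‖u x‖ ^ 2 with hf_def
  set F : ℝ → ℝ := fun x => -(ω ^ 2).im * f x with hF_def
  have huD : UniqueDiffOn ℝ (Set.Icc (0:ℝ) L) := uniqueDiffOn_Icc hL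
  have hu_cont : ContinuousOn u (Set.Icc 0 L) := hu_C1.continuousOn
  have hg_cont : ContinuousOn g (Set.Icc 0 L) :=
    hu_C1.continuousOn_derivWithin huD le_rfl
  have hdu : DifferentiableOn ℝ u (Set.Icc 0 L) := hu_C1.differentiableOn one_ne_zero
  -- at interior points, u has (two-sided) derivative g x
  have hu_deriv : ∀ x ∈ Set.Ioo (0:ℝ) L, HasDerivAt u (g x) x := by
    intro x hx
    have hnx : Set.Icc (0:ℝ) L ∈ nhds x := Icc_mem_nhds hx.1 hx.2
    have hdx : DifferentiableAt ℝ u x :=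
      (hdu x (Set.Ioo_subset_Icc_self hx)).differentiableAt hnx
    have : g x = deriv u x := derivWithin_of_mem_nhds hnx
    rw [this]; exact hdx.hasDerivAt
  -- boundedness of u on [0, L]
  obtain ⟨M, hM⟩ : ∃ M, ∀ x ∈ Set.Icc (0:ℝ) L, ‖u x‖ ≤ M :=
    isCompact_Icc.exists_bound_of_continuousOn hu_cont
  have hM0 : 0 ≤ M := le_trans (norm_nonneg _) (hM 0 (Set.left_mem_Icc.2 hL.le))
  -- integrability of f on [0, L]
  have hf_int : IntervalIntegrable f volume 0 L := by
    rw [intervalIntegrable_iff_integrableOn_Ioc_of_le hL.le]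
    refine ⟨?_, ?_⟩
    · exact ((hn_meas.pow_const 2).aestronglyMeasurable.restrict).mul
        (((continuous_norm.comp_continuousOn
          (hu_cont.mono Set.Ioc_subset_Icc_self)).pow 2).aestronglyMeasurable
          measurableSet_Ioc)
    · apply HasFiniteIntegral.restrict_of_bounded (C := nplus ^ 2 * M ^ 2)
        measure_Ioc_lt_top
      filter_upwards [ae_restrict_mem measurableSet_Ioc] with x hx
      have hx' : x ∈ Set.Icc (0:ℝ) L := Set.Ioc_subset_Icc_self hx
      obtain ⟨h1, h2⟩ := hbounds x hx'
      have h3 : ‖u x‖ ≤ M := hM x hx'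
      have h4 : (0:ℝ) ≤ ‖u x‖ := norm_nonneg _
      have : f x = (n x) ^ 2 * ‖u x‖ ^ 2 := rfl
      rw [Real.norm_eq_abs, _root_.abs_of_nonneg (by positivity), this]
      have h5 : n x ^ 2 ≤ nplus ^ 2 := by nlinarith
      have h6 : ‖u x‖ ^ 2 ≤ M ^ 2 := by nlinarith
      have h7 : (0:ℝ) ≤ n x ^ 2 := sq_nonneg _
      have h8 : (0:ℝ) ≤ ‖u x‖ ^ 2 := sq_nonneg _
      exact mul_le_mul h5 h6 h8 (by nlinarith)
  have hF_int : IntervalIntegrable F volume 0 L := by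
    simpa [hF_def] using hf_int.const_mul (-(ω ^ 2).im)
  -- continuity of W
  have hW_cont : ContinuousOn W (Set.Icc 0 L) := by
    apply Complex.continuous_im.comp_continuousOn
    exact (Complex.continuous_conj.comp_continuousOn hu_cont).mul hg_cont
  -- derivative of W at interior points
  have hW_deriv : ∀ x ∈ Set.Ioo (0:ℝ) L, HasDerivAt W (F x) x := by
    intro x hx
    have hnx : Set.Icc (0:ℝ) L ∈ nhds x := Icc_mem_nhds hx.1 hx.2
    have hgx : g x = deriv u x := derivWithin_of_mem_nhds hnx
    have hu'x : HasDerivAt u (g x) x := hu_deriv x hx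
    have hn_pos : 0 < n x := lt_of_lt_of_le hnm (hbounds x (Set.Ioo_subset_Icc_self hx)).1
    have hODEx : deriv (deriv u) x = -(ω ^ 2 * ((n x : ℂ)) ^ 2 * u x) := by
      have := hODE x hx; linear_combination this
    by_cases hD : DifferentiableAt ℝ (deriv u) x
    · -- regular case
      have hev : g =ᶠ[nhds x] deriv u := by
        filter_upwards [isOpen_Ioo.mem_nhds hx] with y hy
        exact derivWithin_of_mem_nhds (Icc_mem_nhds hy.1 hy.2)
      have hg' : HasDerivAt g (deriv (deriv u) x) x :=
        hD.hasDerivAt.congr_of_eventuallyEq hev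
      have hconj : HasDerivAt (fun y => (starRingEnd ℂ) (u y)) ((starRingEnd ℂ) (g x)) x := by
        exact hu'x.star
      have hmul := hconj.mul hg'
      have hIm2 := (Complex.imCLM.hasFDerivAt.comp_hasDerivAt x hmul)
      have hW2 : HasDerivAt W
          (((starRingEnd ℂ) (g x) * g x + (starRingEnd ℂ) (u x) * deriv (deriv u) x).im) x := by
        exact hIm2
      convert hW2 using 1
      rw [hODEx]
      have hcast : ((n x : ℂ)) ^ 2 = ((n x ^ 2 : ℝ) : ℂ) := by push_cast; ring
      rw [hcast]
      have habs : ‖u x‖ ^ 2 = (u x).re ^ 2 + (u x).im ^ 2 := by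
        rw [Complex.sq_norm, Complex.normSq_apply]; ring
      simp only [hF_def, hf_def, habs, Complex.add_im, Complex.mul_im, Complex.mul_re,
        Complex.conj_re, Complex.conj_im, Complex.neg_im, Complex.neg_re,
        Complex.ofReal_re, Complex.ofReal_im]
      ring
    · -- singular case : u x = 0
      have hdd0 : deriv (deriv u) x = 0 := deriv_zero_of_not_differentiableAt hD
      have hux : u x = 0 := by
        have h := hODE x hx
        rw [hdd0, zero_add] at h
        have hn0 : ((n x : ℂ)) ≠ 0 := by
          exact_mod_cast ne_of_gt hn_pos
        have := mul_eq_zero.mp h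
        rcases this with h' | h'
        · exact absurd h' (by
            apply mul_ne_zero (pow_ne_zero _ hω) (pow_ne_zero _ hn0))
        · exact h'
      have hFx : F x = 0 := by simp [hF_def, hf_def, hux]
      rw [hFx]
      rw [hasDerivAt_iff_tendsto_slope]
      have hslope : ∀ y, y ≠ x → slope W x y
          = ((starRingEnd ℂ) (slope u x y) * g y).im := by
        intro y hy
        have : slope u x y = (y - x)⁻¹ • (u y) := by
          rw [slope_def_module, hux, sub_zero]
        rw [this, slope_def_field, hW_def]
        simp only [hux, map_zero, zero_mul, Complex.zero_im, sub_zero]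
        rw [Complex.real_smul, map_mul, Complex.conj_ofReal, mul_assoc,
          Complex.im_ofReal_mul, div_eq_inv_mul]
      have h1 : Filter.Tendsto (slope u x) (nhdsWithin x {x}ᶜ) (nhds (g x)) :=
        hasDerivAt_iff_tendsto_slope.mp hu'x
      have h2 : Filter.Tendsto g (nhdsWithin x {x}ᶜ) (nhds (g x)) :=
        ((hg_cont.continuousAt hnx).tendsto).mono_left nhdsWithin_le_nhds
      have h3 : Filter.Tendsto (fun y => ((starRingEnd ℂ) (slope u x y) * g y).im)
          (nhdsWithin x {x}ᶜ) (nhds (((starRingEnd ℂ) (g x) * g x).im)) := by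
        apply (Complex.continuous_im.tendsto _).comp
        exact (((Complex.continuous_conj.tendsto _).comp h1).mul h2)
      have h4 : ((starRingEnd ℂ) (g x) * g x).im = 0 := by
        simp [Complex.mul_im]; ring
      rw [h4] at h3
      apply h3.congr'
      filter_upwards [self_mem_nhdsWithin] with y hy
      exact (hslope y hy).symm
  -- FTC
  have hFTC : ∫ x in (0:ℝ)..L, F x = W L - W 0 :=
    integral_eq_sub_of_hasDerivAt_of_le hL.le hW_cont hW_deriv hF_int
  -- boundary values of W
  have hWL : W L = ω.re * ‖u L‖ ^ 2 := by
    by_cases huL : u L = 0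
    · simp [hW_def, huL]
    · have hd : DifferentiableAt ℝ u L := by
        by_contra hnd
        rw [deriv_zero_of_not_differentiableAt hnd] at hBCL
        exact huL (by
          have := hBCL.symm
          rcases mul_eq_zero.mp this with h | h
          · exact absurd h (mul_ne_zero Complex.I_ne_zero hω)
          · exact h)
      have hgL : g L = deriv u L := hd.derivWithin (huD L (Set.right_mem_Icc.2 hL.le))
      rw [hW_def]
      simp only [hgL, hBCL]
      have habs : ‖u L‖ ^ 2 = (u L).re ^ 2 + (u L).im ^ 2 := by
        rw [Complex.sq_norm, Complex.normSq_apply]; ring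
      rw [habs]
      simp only [Complex.mul_im, Complex.mul_re, Complex.conj_re, Complex.conj_im,
        Complex.I_re, Complex.I_im]
      ring
  have hW0 : W 0 = -ω.re * ‖u 0‖ ^ 2 := by
    by_cases hu0 : u 0 = 0
    · simp [hW_def, hu0]
    · have hd : DifferentiableAt ℝ u 0 := by
        by_contra hnd
        rw [deriv_zero_of_not_differentiableAt hnd] at hBC0
        exact hu0 (by
          have := hBC0.symm
          rcases mul_eq_zero.mp this with h | h
          · exact absurd h (mul_ne_zero (neg_ne_zero.mpr Complex.I_ne_zero) hω)
          · exact h)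
      have hg0 : g 0 = deriv u 0 := hd.derivWithin (huD 0 (Set.left_mem_Icc.2 hL.le))
      rw [hW_def]
      simp only [hg0, hBC0]
      have habs : ‖u 0‖ ^ 2 = (u 0).re ^ 2 + (u 0).im ^ 2 := by
        rw [Complex.sq_norm, Complex.normSq_apply]; ring
      rw [habs]
      simp only [Complex.mul_im, Complex.mul_re, Complex.conj_re, Complex.conj_im,
        Complex.I_re, Complex.I_im, Complex.neg_re, Complex.neg_im]
      ring
  -- the integral identity
  have hFint_eq : ∫ x in (0:ℝ)..L, F x = -(ω ^ 2).im * ∫ x in (0:ℝ)..L, f x := by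
    simp only [hF_def]
    exact intervalIntegral.integral_const_mul _ _
  have hω2 : (ω ^ 2).im = 2 * ω.re * ω.im := by
    simp [pow_two, Complex.mul_im]; ring
  -- positivity of the integral
  have hI_pos : 0 < ∫ x in (0:ℝ)..L, f x := by
    obtain ⟨x₀, hx₀, hux₀⟩ := hu_ne
    have hcx : ContinuousWithinAt u (Set.Icc 0 L) x₀ := hu_cont x₀ hx₀
    obtain ⟨ε, hε, hball⟩ := Metric.continuousWithinAt_iff.mp hcx (‖u x₀‖)
      (by simpa [norm_pos_iff] using hux₀)
    set a : ℝ := max 0 (x₀ - ε) with ha_def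
    set b : ℝ := min L (x₀ + ε) with hb_def
    have hab : a < b := by
      rcases hx₀ with ⟨h0, hLx⟩
      apply max_lt <;> apply lt_min <;> linarith
    have hsub : Set.Ioo a b ⊆ Function.support f ∩ Set.Ioc 0 L := by
      intro y hy
      have hyI : y ∈ Set.Icc (0:ℝ) L := ⟨le_of_lt (lt_of_le_of_lt (le_max_left _ _) hy.1),
        le_trans hy.2.le (min_le_left _ _)⟩
      have hyd : dist y x₀ < ε := by
        rw [Real.dist_eq, abs_lt]
        constructor
        · have := lt_of_le_of_lt (le_max_right 0 (x₀ - ε)) hy.1; linarith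
        · have := lt_of_lt_of_le hy.2 (min_le_right L (x₀ + ε)); linarith
      have huy : u y ≠ 0 := by
        intro h0
        have := hball hyI hyd
        rw [h0] at this
        simp [Complex.dist_eq] at this
      constructor
      · have hn_pos : 0 < n y := lt_of_lt_of_le hnm (hbounds y hyI).1
        have : f y = (n y) ^ 2 * ‖u y‖ ^ 2 := rfl
        simp only [Function.mem_support, this]
        exact mul_ne_zero (pow_ne_zero _ (ne_of_gt hn_pos))
          (pow_ne_zero _ (ne_of_gt (norm_pos_iff.mpr huy)))
      · exact ⟨lt_of_le_of_lt (le_max_left _ _) hy.1, le_trans hy.2.le (min_le_left _ _)⟩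
    rw [intervalIntegral.integral_of_le hL.le]
    rw [setIntegral_pos_iff_support_of_nonneg_ae]
    · apply lt_of_lt_of_le _ (measure_mono hsub)
      rw [Real.volume_Ioo]
      exact ENNReal.ofReal_pos.mpr (sub_pos.mpr hab)
    · filter_upwards [ae_restrict_mem measurableSet_Ioc] with y hy
      have hyI : y ∈ Set.Icc (0:ℝ) L := Set.Ioc_subset_Icc_self hy
      have : f y = (n y) ^ 2 * ‖u y‖ ^ 2 := rfl
      rw [this]; positivity
    · rw [← intervalIntegrable_iff_integrableOn_Ioc_of_le hL.le]; exact hf_int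
  -- put everything together
  have hkey : -(2 * ω.re * ω.im) * ∫ x in (0:ℝ)..L, f x
      = ω.re * (‖u 0‖ ^ 2 + ‖u L‖ ^ 2) := by
    rw [← hω2, ← hFint_eq, hFTC, hWL, hW0]; ring
  have hkey2 : -(2 * ω.im) * ∫ x in (0:ℝ)..L, f x
      = ‖u 0‖ ^ 2 + ‖u L‖ ^ 2 := by
    apply mul_left_cancel₀ hRe
    linear_combination hkey
  have hI0 : (∫ x in (0:ℝ)..L, f x) ≠ 0 := ne_of_gt hI_pos
  rw [abs_of_neg hIm, ← hkey2]
  field_simp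
end

section
/- Let n : ℝ → ℝ be continuous with n(L - x) = n(x), and let (ω, u) be a scattering resonance pair on [0,L]: u ∈ C²([0,L],ℂ) nontrivial solving u'' + ω² n² u = 0 with u'(0) = -iω u(0), u'(L) = iω u(L). Then either u(L-x) = u(x) for all x ∈ [0,L] or u(L-x) = -u(x) for all x ∈ [0,L]. -/
open Set

lemma ode_uniq (L : ℝ) (hL : 0 < L) (c : ℝ → ℂ) (hc : Continuous c)
    (w : ℝ → ℂ) (hw : ContDiff ℝ 2 w)
    (hODE : ∀ x ∈ Icc (0:ℝ) L, deriv (deriv w) x = -c x * w x)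
    (h0 : w 0 = 0) (h0' : deriv w 0 = 0) :
    ∀ x ∈ Icc (0:ℝ) L, w x = 0 := by
  -- clamp the coefficient to [0, L]
  set proj : ℝ → ℝ := fun t => max 0 (min t L) with hproj
  have hproj_cont : Continuous proj := continuous_const.max (continuous_id.min continuous_const)
  have hproj_mem : ∀ t, proj t ∈ Icc (0:ℝ) L :=
    fun t => ⟨le_max_left _ _, max_le hL.le (min_le_right _ _)⟩
  have hproj_eq : ∀ t ∈ Icc (0:ℝ) L, proj t = t := by
    intro t ht
    simp only [hproj]
    rw [min_eq_left ht.2, max_eq_right ht.1]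
  obtain ⟨C, hC⟩ : ∃ C, ∀ x ∈ Icc (0:ℝ) L, ‖c x‖ ≤ C :=
    (isCompact_Icc).exists_bound_of_continuousOn hc.continuousOn
  set c' : ℝ → ℂ := fun t => c (proj t) with hc'def
  have hc'_cont : Continuous c' := hc.comp hproj_cont
  have hc'_bound : ∀ t, ‖c' t‖ ≤ C := fun t => hC _ (hproj_mem t)
  set K : NNReal := Real.toNNReal (max C 1) with hK
  have hK1 : (1:ℝ) ≤ K := by
    simp [hK, Real.coe_toNNReal', le_max_iff]
  have hKC : ∀ t, ‖c' t‖ ≤ K := by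
    intro t
    refine (hc'_bound t).trans ?_
    simp [hK, Real.coe_toNNReal', le_max_iff, le_max_left]
  -- the first-order system
  set F : ℝ → ℂ × ℂ → ℂ × ℂ := fun t p => (p.2, -c' t * p.1) with hF
  have hlip : ∀ t, LipschitzWith K (F t) := by
    intro t
    apply LipschitzWith.of_dist_le_mul
    intro p q
    rw [Prod.dist_eq]
    simp only [hF]
    have h1 : dist p.2 q.2 ≤ K * dist p q := by
      calc dist p.2 q.2 ≤ dist p q := le_max_right _ _
        _ = 1 * dist p q := (one_mul _).symm
        _ ≤ K * dist p q := by
            apply mul_le_mul_of_nonneg_right hK1 dist_nonneg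
    have h2 : dist (-c' t * p.1) (-c' t * q.1) ≤ K * dist p q := by
      have : dist (-c' t * p.1) (-c' t * q.1) = ‖c' t‖ * dist p.1 q.1 := by
        rw [dist_eq_norm, dist_eq_norm, ← mul_sub (-c' t), norm_mul]
        simp
      rw [this]
      have hp : dist p.1 q.1 ≤ dist p q := le_max_left _ _
      exact mul_le_mul (hKC t) hp dist_nonneg (NNReal.coe_nonneg K)
    exact max_le h1 h2
  -- the solution
  have hw1 : Differentiable ℝ w := hw.differentiable (by norm_num)
  have hw2 : Differentiable ℝ (deriv w) := by
    have := (contDiff_succ_iff_deriv.mp (by norm_num at hw ⊢; exact hw : ContDiff ℝ (1+1) w)).2.2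
    exact this.differentiable (by norm_num)
  set W : ℝ → ℂ × ℂ := fun t => (w t, deriv w t) with hW
  have hW' : ∀ t ∈ Ico (0:ℝ) L, HasDerivWithinAt W (F t (W t)) (Ici t) t := by
    intro t ht
    have h1 : HasDerivAt w (deriv w t) t := (hw1 t).hasDerivAt
    have h2 : HasDerivAt (deriv w) (deriv (deriv w) t) t := (hw2 t).hasDerivAt
    have ht' : t ∈ Icc (0:ℝ) L := ⟨ht.1, ht.2.le⟩
    have : deriv (deriv w) t = -c' t * w t := by
      rw [hODE t ht', hc'def]
      simp [hproj_eq t ht']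
    rw [this] at h2
    exact (h1.prodMk h2).hasDerivWithinAt
  have hzero : ∀ t ∈ Ico (0:ℝ) L,
      HasDerivWithinAt (fun _ : ℝ => ((0 : ℂ), (0 : ℂ))) (F t ((0 : ℂ), (0 : ℂ))) (Ici t) t := by
    intro t ht
    have : F t ((0:ℂ), (0:ℂ)) = ((0:ℂ), (0:ℂ)) := by simp [hF]
    rw [this]
    exact (hasDerivWithinAt_const _ _ _)
  have heq := ODE_solution_unique hlip
    (Continuous.continuousOn (hw1.continuous.prodMk hw2.continuous))
    hW' (continuousOn_const) hzero (by simp [hW, h0, h0'])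
  intro x hx
  have := heq hx
  simpa [hW] using congrArg Prod.fst this

theorem stmt_7
    (L : ℝ) (hL : 0 < L)
    (n : ℝ → ℝ) (hn_cont : Continuous n)
    (hn_sym : ∀ x : ℝ, n (L - x) = n x)
    (ω : ℂ) (u : ℝ → ℂ)
    (hu_C2 : ContDiff ℝ 2 u)
    (hu_ne : ∃ x ∈ Set.Icc (0:ℝ) L, u x ≠ 0)
    (hODE : ∀ x ∈ Set.Icc (0:ℝ) L,
      deriv (deriv u) x + ω ^ 2 * ((n x : ℂ)) ^ 2 * u x = 0)
    (hBC0 : deriv u 0 = -Complex.I * ω * u 0)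
    (hBCL : deriv u L = Complex.I * ω * u L) :
    (∀ x ∈ Set.Icc (0:ℝ) L, u (L - x) = u x)
      ∨ (∀ x ∈ Set.Icc (0:ℝ) L, u (L - x) = -u x) := by
  set c : ℝ → ℂ := fun x => ω ^ 2 * ((n x : ℂ)) ^ 2 with hcdef
  have hc_cont : Continuous c := by fun_prop
  have hODE' : ∀ x ∈ Set.Icc (0:ℝ) L, deriv (deriv u) x = -c x * u x := by
    intro x hx
    have := hODE x hx
    simp only [hcdef]
    linear_combination this
  -- u 0 ≠ 0
  have hu1 : Differentiable ℝ u := hu_C2.differentiable (by norm_num)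
  have hu2 : Differentiable ℝ (deriv u) := by
    have := (contDiff_succ_iff_deriv.mp
      (by norm_num at hu_C2 ⊢; exact hu_C2 : ContDiff ℝ (1+1) u)).2.2
    exact this.differentiable (by norm_num)
  have hu0 : u 0 ≠ 0 := by
    intro h
    have h' : deriv u 0 = 0 := by rw [hBC0, h, mul_zero]
    obtain ⟨x, hx, hux⟩ := hu_ne
    exact hux (ode_uniq L hL c hc_cont u hu_C2 hODE' h h' x hx)
  -- the reflected function
  set v : ℝ → ℂ := fun x => u (L - x) with hvdef
  have hv_C2 : ContDiff ℝ 2 v := hu_C2.comp (contDiff_const.sub contDiff_id)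
  have hv_deriv : ∀ x, HasDerivAt v (-(deriv u (L - x))) x := by
    intro x
    have h1 : HasDerivAt (fun x : ℝ => L - x) (-1) x := (hasDerivAt_id x).const_sub L
    have h2 : HasDerivAt u (deriv u ((fun x : ℝ => L - x) x)) ((fun x : ℝ => L - x) x) :=
      (hu1 _).hasDerivAt
    have := h2.scomp x h1
    convert this using 1
    · rfl
    · rfl
    · simp
  have hv_deriv_eq : deriv v = fun x => -(deriv u (L - x)) :=
    funext fun x => (hv_deriv x).deriv
  have hv_deriv2 : ∀ x, deriv (deriv v) x = deriv (deriv u) (L - x) := by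
    intro x
    rw [hv_deriv_eq]
    have h1 : HasDerivAt (fun x : ℝ => L - x) (-1) x := (hasDerivAt_id x).const_sub L
    have h2 : HasDerivAt (deriv u) (deriv (deriv u) ((fun x : ℝ => L - x) x))
        ((fun x : ℝ => L - x) x) := (hu2 _).hasDerivAt
    have h3 := (h2.scomp x h1).neg
    have : HasDerivAt (fun x => -(deriv u (L - x))) (deriv (deriv u) (L - x)) x := by
      convert h3 using 1
      · rfl
      · rfl
      · simp
    exact this.deriv
  -- w = u 0 * v - u L * u
  set w : ℝ → ℂ := fun x => u 0 * v x - u L * u x with hwdef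
  have hw_C2 : ContDiff ℝ 2 w := (contDiff_const.mul hv_C2).sub (contDiff_const.mul hu_C2)
  have hw_deriv : ∀ x, deriv w x = u 0 * deriv v x - u L * deriv u x := by
    intro x
    have hv1 : Differentiable ℝ v := hv_C2.differentiable (by norm_num)
    rw [hwdef]
    rw [deriv_fun_sub ((hv1 x).const_mul _) ((hu1 x).const_mul _),
        deriv_const_mul _ (hv1 x), deriv_const_mul _ (hu1 x)]
  have hw_deriv_fun : deriv w = fun x => u 0 * deriv v x - u L * deriv u x :=
    funext hw_deriv
  have hv2 : Differentiable ℝ (deriv v) := by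
    rw [hv_deriv_eq]
    exact (hu2.comp ((differentiable_const L).sub differentiable_id)).neg
  have hw_deriv2 : ∀ x, deriv (deriv w) x
      = u 0 * deriv (deriv v) x - u L * deriv (deriv u) x := by
    intro x
    rw [hw_deriv_fun]
    rw [deriv_fun_sub ((hv2 x).const_mul _) ((hu2 x).const_mul _),
        deriv_const_mul _ (hv2 x), deriv_const_mul _ (hu2 x)]
  have hwODE : ∀ x ∈ Set.Icc (0:ℝ) L, deriv (deriv w) x = -c x * w x := by
    intro x hx
    have hLx : L - x ∈ Set.Icc (0:ℝ) L := ⟨by linarith [hx.2], by linarith [hx.1]⟩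
    have h1 : deriv (deriv u) (L - x) = -c x * v x := by
      have := hODE' (L - x) hLx
      rw [this, hcdef]
      simp only [hn_sym x, hvdef]
    rw [hw_deriv2, hv_deriv2, h1, hODE' x hx, hwdef]
    ring
  have hw0 : w 0 = 0 := by
    simp only [hwdef, hvdef, sub_zero]
    ring
  have hw0' : deriv w 0 = 0 := by
    rw [hw_deriv 0, hv_deriv_eq]
    simp only [sub_zero, hBC0, hBCL, hvdef]
    ring
  have hw_zero := ode_uniq L hL c hc_cont w hw_C2 hwODE hw0 hw0'
  -- extract the symmetry
  have key : ∀ x ∈ Set.Icc (0:ℝ) L, u 0 * u (L - x) = u L * u x := by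
    intro x hx
    have := hw_zero x hx
    simp only [hwdef, hvdef] at this
    linear_combination this
  obtain ⟨k, hk⟩ : ∃ k : ℂ, u L = k * u 0 := ⟨u L / u 0, (div_mul_cancel₀ _ hu0).symm⟩
  have hkey : ∀ x ∈ Set.Icc (0:ℝ) L, u (L - x) = k * u x := by
    intro x hx
    apply mul_left_cancel₀ hu0
    rw [key x hx, hk]
    ring
  obtain ⟨x₀, hx₀, hux₀⟩ := hu_ne
  have hLx₀ : L - x₀ ∈ Set.Icc (0:ℝ) L := ⟨by linarith [hx₀.2], by linarith [hx₀.1]⟩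
  have h1 : u (L - (L - x₀)) = k * u (L - x₀) := hkey (L - x₀) hLx₀
  rw [sub_sub_cancel] at h1
  have h2 : u (L - x₀) = k * u x₀ := hkey x₀ hx₀
  have hk2 : k ^ 2 = 1 := by
    have h3 : (k ^ 2 - 1) * u x₀ = 0 := by
      rw [h2] at h1
      linear_combination -h1
    rcases mul_eq_zero.mp h3 with h | h
    · linear_combination h
    · exact absurd h hux₀
  have : (k - 1) * (k + 1) = 0 := by linear_combination hk2
  rcases mul_eq_zero.mp this with h | h
  · left
    intro x hx
    rw [hkey x hx]
    have : k = 1 := by linear_combination h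
    rw [this, one_mul]
  · right
    intro x hx
    rw [hkey x hx]
    have : k = -1 := by linear_combination h
    rw [this]
    ring
end
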